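/- Let A, B and Σ be as in the state-expansion construction: A is an N×N nonnegative integer matrix, c_1,…,c_N ∈ ℕ, Σ = {(i,j) | 1 ≤ i ≤ N, 0 ≤ j ≤ c_i}, and B((i,j),(k,l)) = A(i,k) if j = c_i, l = 0; = 1 if i = k, j+1 = l; = 0 otherwise. Then there is an isomorphism Φ : ℤ^N/(I − Aᵗ)ℤ^N → ℤ^Σ/(I − Bᵗ)ℤ^Σ of abelian groups sending the class of (c_1 + 1, c_2 + 1, …, c_N + 1) to the class of the all-ones vector u_B, where Φ sends the class of the standard basis vector e_i to the class of f_{i,0}. -/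

import Mathlib

open Matrix

def phiAux {N : ℕ} (c : Fin N → ℕ) : (Fin N → ℤ) →ₗ[ℤ] (((i : Fin N) × Fin (c i + 1)) → ℤ) where
  toFun x p := if p.2.val = 0 then x p.1 else 0
  map_add' x y := by funext p; by_cases h : p.2.val = 0 <;> simp_all
  map_smul' m x := by funext p; by_cases h : p.2.val = 0 <;> simp_all

def psiAux {N : ℕ} (c : Fin N → ℕ) : (((i : Fin N) × Fin (c i + 1)) → ℤ) →ₗ[ℤ] (Fin N → ℤ) where
  toFun y i := ∑ j, y ⟨i, j⟩
  map_add' x y := by funext i; simp [Finset.sum_add_distrib]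
  map_smul' m x := by funext i; simp [Finset.mul_sum]

set_option maxHeartbeats 1000000 in
theorem stmt16 {N : ℕ} (A : Matrix (Fin N) (Fin N) ℤ)
    (hpos : ∀ i j, 0 ≤ A i j)
    (c : Fin N → ℕ)
    (B : Matrix ((i : Fin N) × Fin (c i + 1)) ((i : Fin N) × Fin (c i + 1)) ℤ)
    (hB : ∀ p q : (i : Fin N) × Fin (c i + 1),
      B p q = if p.2.val = c p.1 ∧ q.2.val = 0 then A p.1 q.1
        else if p.1 = q.1 ∧ p.2.val + 1 = q.2.val then 1 else 0) :
    ∃ Φ : ((Fin N → ℤ) ⧸ LinearMap.range (Matrix.toLin' (1 - Aᵀ))) ≃+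
        ((((i : Fin N) × Fin (c i + 1)) → ℤ) ⧸
          LinearMap.range (Matrix.toLin' (1 - Bᵀ))),
      Φ (Submodule.Quotient.mk fun i => (c i : ℤ) + 1) =
        Submodule.Quotient.mk (fun _ => 1) ∧
      ∀ i : Fin N,
        Φ (Submodule.Quotient.mk (Pi.single i 1)) =
          Submodule.Quotient.mk (Pi.single ⟨i, 0⟩ 1) := by
  classical
  -- application formulas
  have hAapp : ∀ (w : Fin N → ℤ) (k : Fin N),
      Matrix.toLin' (1 - Aᵀ) w k = w k - ∑ i, A i k * w i := by
    intro w k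
    simp [Matrix.toLin'_apply, Matrix.mulVec, dotProduct, Matrix.sub_apply, Matrix.one_apply,
      Matrix.transpose_apply, sub_mul, Finset.sum_sub_distrib, ite_mul, Finset.sum_ite_eq,
      mul_comm]
  have hsum : ∀ (w : ((i' : Fin N) × Fin (c i' + 1)) → ℤ) (q : ((i' : Fin N) × Fin (c i' + 1))), ∑ p, B p q * w p =
      (if q.2.val = 0 then ∑ i, A i q.1 * w ⟨i, Fin.last (c i)⟩
       else w ⟨q.1, ⟨q.2.val - 1, by omega⟩⟩) := by
    intro w q
    by_cases h0 : q.2.val = 0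
    · rw [if_pos h0, ← Finset.univ_sigma_univ, Finset.sum_sigma]
      refine Finset.sum_congr rfl fun i _ => ?_
      rw [Finset.sum_eq_single (Fin.last (c i))]
      · rw [hB]; simp [Fin.last, h0]
      · intro j _ hj
        rw [hB]
        have h1 : ¬ (j.val = c i ∧ q.2.val = 0) := by
          rintro ⟨h, -⟩; exact hj (Fin.ext h)
        have h2 : ¬ (i = q.1 ∧ j.val + 1 = q.2.val) := by
          rintro ⟨-, h⟩; omega
        simp [h1, h2]
        intro hj' _; exact absurd ⟨hj', h0⟩ h1
      · simp
    · rw [if_neg h0]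
      have hq : q.2.val - 1 < c q.1 + 1 := by omega
      rw [Fintype.sum_eq_single (⟨q.1, ⟨q.2.val - 1, hq⟩⟩ : ((i' : Fin N) × Fin (c i' + 1)))]
      · rw [hB]
        have h1 : ¬ ((q.2.val - 1 : ℕ) = c q.1 ∧ q.2.val = 0) := by tauto
        simp only [h1, if_false]
        have h2 : q.1 = q.1 ∧ (q.2.val - 1) + 1 = q.2.val := ⟨rfl, by omega⟩
        simp [h2]
      · intro p hp
        rw [hB]
        have h1 : ¬ (p.2.val = c p.1 ∧ q.2.val = 0) := by tauto
        have h2 : ¬ (p.1 = q.1 ∧ p.2.val + 1 = q.2.val) := by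
          rintro ⟨ha, hb⟩
          apply hp
          obtain ⟨p1, p2⟩ := p
          cases ha
          have hb' : p2.val + 1 = q.2.val := hb
          exact congrArg _ (Fin.ext (by simp only [Fin.val_mk]; omega))
        simp [h1, h2]
        intro _ hq0; exact absurd (by simp [hq0]) h0
  have hBapp : ∀ (w : ((i' : Fin N) × Fin (c i' + 1)) → ℤ) (q : ((i' : Fin N) × Fin (c i' + 1))),
      Matrix.toLin' (1 - Bᵀ) w q = w q - ∑ p, B p q * w p := by
    intro w q
    simp [Matrix.toLin'_apply, Matrix.mulVec, dotProduct, Matrix.sub_apply, Matrix.one_apply,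
      Matrix.transpose_apply, sub_mul, Finset.sum_sub_distrib, ite_mul, Finset.sum_ite_eq,
      mul_comm]
  set RA := LinearMap.range (Matrix.toLin' (1 - Aᵀ)) with hRA
  set RB := LinearMap.range (Matrix.toLin' (1 - Bᵀ)) with hRB
  -- phi maps RA into RB
  have hφ : RA ≤ RB.comap (phiAux c) := by
    rintro _ ⟨v, rfl⟩
    refine ⟨fun p => v p.1, funext fun q => ?_⟩
    rw [hBapp, hsum]
    show _ = (if q.2.val = 0 then Matrix.toLin' (1 - Aᵀ) v q.1 else 0)
    by_cases h0 : q.2.val = 0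
    · rw [if_pos h0, if_pos h0, hAapp]
    · rw [if_neg h0, if_neg h0]; ring
  -- psi maps RB into RA
  have hψ : RB ≤ RA.comap (psiAux c) := by
    rintro _ ⟨w, rfl⟩
    refine ⟨fun i => w ⟨i, Fin.last (c i)⟩, funext fun k => ?_⟩
    rw [hAapp]
    show _ = ∑ j : Fin (c k + 1), Matrix.toLin' (1 - Bᵀ) w ⟨k, j⟩
    have : ∀ j : Fin (c k + 1), Matrix.toLin' (1 - Bᵀ) w ⟨k, j⟩ =
        w ⟨k, j⟩ - (if j.val = 0 then ∑ i, A i k * w ⟨i, Fin.last (c i)⟩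
          else w ⟨k, ⟨j.val - 1, by omega⟩⟩) := by
      intro j; rw [hBapp, hsum]
    have h1 : ∑ j : Fin (c k + 1), w ⟨k, j⟩
        = ∑ j : Fin (c k), w ⟨k, j.castSucc⟩ + w ⟨k, Fin.last (c k)⟩ :=
      Fin.sum_univ_castSucc _
    have h2 : (∑ j : Fin (c k + 1),
          if (j : Fin (c k + 1)).val = 0 then ∑ i, A i k * w ⟨i, Fin.last (c i)⟩
            else w ⟨k, ⟨(j : Fin (c k + 1)).val - 1, by omega⟩⟩)
        = (∑ i, A i k * w ⟨i, Fin.last (c i)⟩) + ∑ j : Fin (c k), w ⟨k, j.castSucc⟩ := by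
      rw [Fin.sum_univ_succ]
      congr 1
    calc w ⟨k, Fin.last (c k)⟩ - ∑ i, A i k * w ⟨i, Fin.last (c i)⟩
        = (∑ j : Fin (c k), w ⟨k, j.castSucc⟩ + w ⟨k, Fin.last (c k)⟩)
          - ((∑ i, A i k * w ⟨i, Fin.last (c i)⟩) + ∑ j : Fin (c k), w ⟨k, j.castSucc⟩) := by
          ring
      _ = (∑ j : Fin (c k + 1), w ⟨k, j⟩) - ∑ j : Fin (c k + 1),
            (if (j : Fin (c k + 1)).val = 0 then ∑ i, A i k * w ⟨i, Fin.last (c i)⟩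
              else w ⟨k, ⟨(j : Fin (c k + 1)).val - 1, by omega⟩⟩) := by
          rw [h1, h2]
      _ = ∑ j : Fin (c k + 1), Matrix.toLin' (1 - Bᵀ) w ⟨k, j⟩ := by
          rw [← Finset.sum_sub_distrib]
          exact Finset.sum_congr rfl fun j _ => (this j).symm
  let F := Submodule.mapQ RA RB (phiAux c) hφ
  let G := Submodule.mapQ RB RA (psiAux c) hψ
  have hGF : G.comp F = LinearMap.id := by
    apply Submodule.linearMap_qext
    refine LinearMap.ext fun x => ?_
    simp only [LinearMap.comp_apply, Submodule.mkQ_apply, Submodule.mapQ_apply, F, G,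
      LinearMap.id_apply]
    congr 1
    funext i
    show ∑ j : Fin (c i + 1), (if (j : Fin (c i + 1)).val = 0 then x i else 0) = x i
    rw [Fin.sum_univ_succ]
    simp
  have hFG : F.comp G = LinearMap.id := by
    apply Submodule.linearMap_qext
    refine LinearMap.ext fun y => ?_
    simp only [LinearMap.comp_apply, Submodule.mkQ_apply, Submodule.mapQ_apply, F, G,
      LinearMap.id_apply]
    rw [Submodule.Quotient.eq]
    refine ⟨fun p => ∑ l, if l.val ≤ p.2.val then 0 else y ⟨p.1, l⟩, funext fun q => ?_⟩
    rw [hBapp, hsum]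
    show _ = (if q.2.val = 0 then ∑ j, y ⟨q.1, j⟩ else 0) - y q
    by_cases h0 : q.2.val = 0
    · rw [if_pos h0, if_pos h0]
      have hz : ∀ i : Fin N, (∑ l, if l.val ≤ (Fin.last (c i)).val then 0
          else y ⟨i, l⟩) = 0 :=
        fun i => Finset.sum_eq_zero fun l _ => if_pos (by simp [Fin.le_last, Fin.is_le])
      have : (∑ i, A i q.1 * ∑ l, if l.val ≤ (Fin.last (c i)).val then 0 else y ⟨i, l⟩) = 0 :=
        Finset.sum_eq_zero fun i _ => by rw [hz i, mul_zero]
      rw [this, sub_zero]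
      have hsplit : (∑ l, if l.val ≤ q.2.val then 0 else y ⟨q.1, l⟩)
          = (∑ l, y ⟨q.1, l⟩) - ∑ l, (if l = q.2 then y ⟨q.1, l⟩ else 0) := by
        rw [← Finset.sum_sub_distrib]
        refine Finset.sum_congr rfl fun l _ => ?_
        by_cases hl : l = q.2
        · have hv : l.val = q.2.val := by rw [hl]
          rw [if_pos (by omega : l.val ≤ q.2.val), if_pos hl]; ring
        · rw [if_neg hl, if_neg (by
            intro hle
            exact hl (Fin.ext (by omega)))]
          ring
      rw [hsplit, Finset.sum_ite_eq' Finset.univ q.2 (fun l => y ⟨q.1, l⟩)]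
      simp
    · rw [if_neg h0, if_neg h0, zero_sub]
      rw [← Finset.sum_sub_distrib]
      have hstep : ∀ l : Fin (c q.1 + 1),
          ((if l.val ≤ q.2.val then 0 else y ⟨q.1, l⟩) -
            (if l.val ≤ (⟨q.2.val - 1, by omega⟩ : Fin (c q.1 + 1)).val then 0
              else y ⟨q.1, l⟩))
          = (if l = q.2 then -y ⟨q.1, l⟩ else 0) := by
        intro l
        simp only [Fin.val_mk]
        by_cases hl : l = q.2
        · rw [if_pos hl, if_pos (by omega : l.val ≤ q.2.val),
            if_neg (by omega : ¬ l.val ≤ q.2.val - 1)]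
          ring
        · have hlv : l.val ≠ q.2.val := fun h => hl (Fin.ext h)
          rw [if_neg hl]
          by_cases h2 : l.val ≤ q.2.val
          · rw [if_pos h2, if_pos (by omega)]; ring
          · rw [if_neg h2, if_neg (by omega)]; ring
      rw [Finset.sum_congr rfl fun l _ => hstep l,
        Finset.sum_ite_eq' Finset.univ q.2 (fun l => -y ⟨q.1, l⟩)]
      simp
  refine ⟨(LinearEquiv.ofLinear F G hFG hGF).toAddEquiv, ?_, ?_⟩
  · simp only [LinearEquiv.coe_toAddEquiv, LinearEquiv.ofLinear_apply]
    show F (Submodule.Quotient.mk fun i => (c i : ℤ) + 1) = _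
    rw [Submodule.mapQ_apply, Submodule.Quotient.eq]
    refine ⟨fun p => (c p.1 : ℤ) - p.2.val, funext fun q => ?_⟩
    rw [hBapp, hsum]
    show _ = (if q.2.val = 0 then (c q.1 : ℤ) + 1 else 0) - 1
    by_cases h0 : q.2.val = 0
    · rw [if_pos h0, if_pos h0]
      have hz : (∑ i, A i q.1 * ((c (⟨i, Fin.last (c i)⟩ : ((i' : Fin N) × Fin (c i' + 1))).1 : ℤ) -
          ((⟨i, Fin.last (c i)⟩ : ((i' : Fin N) × Fin (c i' + 1))).2.val : ℤ))) = 0 :=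
        Finset.sum_eq_zero fun i _ => by simp [Fin.last]
      rw [hz]
      push_cast
      omega
    · simp only [if_neg h0, Fin.val_mk]
      push_cast
      omega
  · intro i
    simp only [LinearEquiv.coe_toAddEquiv, LinearEquiv.ofLinear_apply]
    show F (Submodule.Quotient.mk (Pi.single i 1)) = _
    rw [Submodule.mapQ_apply]
    congr 1
    funext q
    have hl : (phiAux c) (Pi.single i 1) q
        = (if q.2.val = 0 then (Pi.single i 1 : Fin N → ℤ) q.1 else 0) := rfl
    rw [hl, Pi.single_apply, Pi.single_apply]
    obtain ⟨q1, q2⟩ := q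
    by_cases h1 : q1 = i
    · subst h1
      by_cases h0 : q2.val = 0
      · have hq2 : q2 = 0 := Fin.ext h0
        subst hq2
        simp
      · have hne : (⟨q1, q2⟩ : (i' : Fin N) × Fin (c i' + 1)) ≠ ⟨q1, 0⟩ := by
          intro h
          apply h0
          have h2 := (Sigma.mk.inj_iff.mp h).2
          rw [eq_of_heq h2]
          rfl
        simp [h0, hne]
    · have hne : (⟨q1, q2⟩ : (i' : Fin N) × Fin (c i' + 1)) ≠ ⟨i, 0⟩ := fun h =>
        h1 (Sigma.mk.inj_iff.mp h).1
      simp [h1, hne]
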